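/- Let f be the rank function of a polymatroid on ground set M and i ∈ M. Define (f↓i)(A) = f(A) if i ∉ A, and f(A) − (f(M) − f(M∖{i})) if i ∈ A. Then f↓i is again a polymatroid rank function (non-negative, monotone, submodular), and it is tight at i, i.e. (f↓i)(M) = (f↓i)(M∖{i}). -/
import Mathlib


/-- Tightening a polymatroid at an element `i` yields a polymatroid tight at `i`. -/
theorem tightening_is_polymatroid {α : Type*} [DecidableEq α] (M : Finset α) (f : Finset α → ℝ)
    (hempty : f ∅ = 0)
    (hnonneg : ∀ A, A ⊆ M → 0 ≤ f A)
    (hmono : ∀ A B : Finset α, A ⊆ B → B ⊆ M → f A ≤ f B)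
    (hsub : ∀ A B : Finset α, A ⊆ M → B ⊆ M → f (A ∪ B) + f (A ∩ B) ≤ f A + f B)
    (i : α) (hi : i ∈ M)
    (g : Finset α → ℝ)
    (hg : ∀ A : Finset α, g A = if i ∈ A then f A - (f M - f (M \ {i})) else f A) :
    g ∅ = 0 ∧
    (∀ A, A ⊆ M → 0 ≤ g A) ∧
    (∀ A B : Finset α, A ⊆ B → B ⊆ M → g A ≤ g B) ∧
    (∀ A B : Finset α, A ⊆ M → B ⊆ M → g (A ∪ B) + g (A ∩ B) ≤ g A + g B) ∧
    g M = g (M \ {i}) := by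
  -- key lemma: for i ∈ A ⊆ M, d := f M - f (M\{i}) ≤ f A - f (A\{i})
  have key : ∀ A : Finset α, A ⊆ M → i ∈ A →
      f M - f (M \ {i}) ≤ f A - f (A \ {i}) := by
    intro A hA hiA
    have h := hsub A (M \ {i}) hA (Finset.sdiff_subset)
    have h1 : A ∪ (M \ {i}) = M := by
      apply Finset.Subset.antisymm
      · exact Finset.union_subset hA Finset.sdiff_subset
      · intro x hx
        by_cases hxi : x = i
        · exact Finset.mem_union_left _ (hxi ▸ hiA)
        · exact Finset.mem_union_right _ (by simp [hx, hxi])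
    have h2 : A ∩ (M \ {i}) = A \ {i} := by
      ext x; simp only [Finset.mem_inter, Finset.mem_sdiff, Finset.mem_singleton]
      constructor
      · rintro ⟨hx, _, hxi⟩; exact ⟨hx, hxi⟩
      · rintro ⟨hx, hxi⟩; exact ⟨hx, hA hx, hxi⟩
    rw [h1, h2] at h
    linarith
  refine ⟨?_, ?_, ?_, ?_, ?_⟩
  · simp [hg, hempty]
  · intro A hA
    rw [hg]
    split_ifs with h
    · have := key A hA h
      have h0 := hnonneg (A \ {i}) (Finset.sdiff_subset.trans hA)
      linarith
    · exact hnonneg A hA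
  · intro A B hAB hB
    rw [hg, hg]
    split_ifs with h1 h2 h2
    · exact sub_le_sub_right (hmono A B hAB hB) _
    · exact absurd (hAB h1) h2
    · have hk := key B hB h2
      have hAB' : A ⊆ B \ {i} := fun x hx => by
        simp only [Finset.mem_sdiff, Finset.mem_singleton]
        exact ⟨hAB hx, fun hxe => h1 (hxe ▸ hx)⟩
      have := hmono A (B \ {i}) hAB' (Finset.sdiff_subset.trans hB)
      linarith
    · exact hmono A B hAB hB
  · intro A B hA hB
    have hs := hsub A B hA hB
    rw [hg, hg, hg, hg]
    by_cases h1 : i ∈ A <;> by_cases h2 : i ∈ B <;>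
      simp [Finset.mem_union, Finset.mem_inter, h1, h2] <;> linarith
  · rw [hg, hg]
    simp [hi]
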